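/- There exist real constants σ* > 1 and C > 0 such that for every real σ ≥ σ*: f₁(σ) ≠ 0, the value f₁(1−σ)/f₁(σ) is a positive real number, and f₁(1−σ)/f₁(σ) ≤ C·σ^{−2}. In particular f₁(1−σ)/f₁(σ) → 0 as σ → +∞. -/

import Mathlib

open Complex

noncomputable def chi (s : ℂ) : ℂ := s * (s - 1) * completedRiemannZeta₀ s + 1

noncomputable def A : ℂ := Real.pi / 3 - 1

noncomputable def f1 (s : ℂ) : ℂ :=
  (s - 1) * ((s - 1) * (3 * s - 2) * (A * s - A + 1) * chi (s + 1) * chi (3 * s)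
    - (s + 1) * (s - 2) * chi s * chi (3 * s - 1)
    - 2 * (s - 1) * (s - 2) * chi s * chi (3 * s))

noncomputable def f2 (s : ℂ) : ℂ :=
  (s - 2) * ((A * s + 3) * (s - 1) ^ 2 * chi (s + 2)
    - 2 * (s - 1) * (s - 3) * chi (s + 1)
    - (s + 2) * (s - 3) * chi s)

noncomputable def Z1 (s : ℂ) : ℂ := chi (2 * s) * f1 s - chi (2 * s - 1) * f1 (1 - s)

noncomputable def Z2 (s : ℂ) : ℂ := chi (2 * s) * f2 s - chi (2 * s - 1) * f2 (1 - s)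

lemma chi_one_sub (s : ℂ) : chi (1 - s) = chi s := by
  unfold chi
  rw [completedRiemannZeta₀_one_sub]
  ring

/-- real zeta sum -/
noncomputable def Zr (t : ℝ) : ℝ := ∑' n : ℕ, 1 / (n : ℝ) ^ t

/-- real chi -/
noncomputable def rc (t : ℝ) : ℝ :=
  t * (t - 1) * (Real.pi ^ (-t / 2) * Real.Gamma (t / 2) * Zr t)

lemma chi_ofReal {t : ℝ} (ht : 1 < t) : chi (t : ℂ) = (rc t : ℂ) := by
  have h0 : (t : ℂ) ≠ 0 := by
    simp only [ne_eq, ofReal_eq_zero]; linarith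
  have h1 : (t : ℂ) ≠ 1 := by
    simp only [ne_eq]; intro h
    have : t = 1 := by exact_mod_cast h
    linarith
  have hre : 1 < (t : ℂ).re := by simpa using ht
  have key : chi (t : ℂ) = (t : ℂ) * ((t : ℂ) - 1) * completedRiemannZeta (t : ℂ) := by
    unfold chi
    have h1' : (1 : ℂ) - (t : ℂ) ≠ 0 := sub_ne_zero.mpr (Ne.symm h1)
    rw [completedRiemannZeta_eq]
    field_simp
    ring
  rw [key, completedZeta_eq_tsum_of_one_lt_re hre]
  have hπ : ((Real.pi ^ (-t / 2) : ℝ) : ℂ) = (Real.pi : ℂ) ^ (-(t : ℂ) / 2) := by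
    rw [Complex.ofReal_cpow Real.pi_pos.le]
    push_cast
    ring_nf
  have hΓ : ((Real.Gamma (t / 2) : ℝ) : ℂ) = Complex.Gamma ((t : ℂ) / 2) := by
    rw [← Complex.Gamma_ofReal]
    push_cast
    ring_nf
  have hZ : ((Zr t : ℝ) : ℂ) = ∑' n : ℕ, 1 / (n : ℂ) ^ (t : ℂ) := by
    rw [Zr, Complex.ofReal_tsum]
    congr 1
    ext n
    rw [Complex.ofReal_div, Complex.ofReal_cpow (Nat.cast_nonneg n)]
    push_cast
    ring_nf
  rw [rc]
  push_cast [hπ, hΓ, hZ]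
  ring

lemma Zr_summable {t : ℝ} (ht : 1 < t) : Summable (fun n : ℕ => 1 / (n : ℝ) ^ t) :=
  Real.summable_one_div_nat_rpow.mpr ht

lemma Zr_ge_one {t : ℝ} (ht : 1 < t) : 1 ≤ Zr t := by
  have h := Summable.le_tsum (Zr_summable ht) 1 (fun i _ => by positivity)
  simpa [Zr, one_div] using h

lemma Zr_le_two {t : ℝ} (ht : 2 ≤ t) : Zr t ≤ 2 := by
  have hmono : Zr t ≤ Zr 2 := by
    apply Summable.tsum_le_tsum _ (Zr_summable (by linarith)) (Zr_summable one_lt_two)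
    intro n
    rcases Nat.eq_zero_or_pos n with h | h
    · subst h
      simp [Real.zero_rpow (by linarith : t ≠ 0)]
    · have h1 : (1 : ℝ) ≤ (n : ℝ) := by exact_mod_cast h
      apply one_div_le_one_div_of_le (by positivity)
      exact Real.rpow_le_rpow_of_exponent_le h1 ht
  have hZ2 : Zr 2 = Real.pi ^ 2 / 6 := by
    rw [Zr, ← hasSum_zeta_two.tsum_eq]
    congr 1; ext n
    rw [Real.rpow_two]
  have : Real.pi ^ 2 / 6 ≤ 2 := by
    nlinarith [Real.pi_lt_d2, Real.pi_pos]
  linarith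

lemma gamma_step {y : ℝ} (hy : 0 < y) :
    Real.Gamma (y + 1 / 2) ≤ Real.Gamma y * Real.sqrt y := by
  have hy1 : (0 : ℝ) < y + 1 := by linarith
  have h := Real.convexOn_log_Gamma.2 (Set.mem_Ioi.mpr hy) (Set.mem_Ioi.mpr hy1)
      (by norm_num : (0:ℝ) ≤ 1/2) (by norm_num : (0:ℝ) ≤ 1/2) (by norm_num)
  simp only [Function.comp_apply, smul_eq_mul] at h
  have harg : (1/2 : ℝ) * y + (1/2 : ℝ) * (y + 1) = y + 1/2 := by ring
  rw [harg] at h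
  have hGpos : 0 < Real.Gamma y := Real.Gamma_pos_of_pos hy
  have hGpos1 : 0 < Real.Gamma (y + 1) := Real.Gamma_pos_of_pos hy1
  have hGpos2 : 0 < Real.Gamma (y + 1/2) := Real.Gamma_pos_of_pos (by linarith)
  have hexp := Real.exp_le_exp.mpr h
  rw [Real.exp_log hGpos2] at hexp
  have hrhs : Real.exp (1/2 * Real.log (Real.Gamma y) + 1/2 * Real.log (Real.Gamma (y+1)))
      = Real.sqrt (Real.Gamma y * Real.Gamma (y + 1)) := by
    rw [Real.exp_add, ← Real.log_rpow hGpos, ← Real.log_rpow hGpos1,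
      Real.exp_log (by positivity), Real.exp_log (by positivity),
      Real.sqrt_eq_rpow, Real.mul_rpow hGpos.le hGpos1.le]
  rw [hrhs] at hexp
  calc Real.Gamma (y + 1/2) ≤ Real.sqrt (Real.Gamma y * Real.Gamma (y + 1)) := hexp
    _ = Real.Gamma y * Real.sqrt y := by
        rw [Real.Gamma_add_one hy.ne', show Real.Gamma y * (y * Real.Gamma y)
            = y * (Real.Gamma y * Real.Gamma y) by ring, Real.sqrt_mul hy.le,
          Real.sqrt_mul_self hGpos.le]
        ring

lemma rc_pos {t : ℝ} (ht : 2 ≤ t) : 0 < rc t := by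
  have h1 : (0:ℝ) < Real.pi ^ (-t / 2) := Real.rpow_pos_of_pos Real.pi_pos _
  have h2 : 0 < Real.Gamma (t / 2) := Real.Gamma_pos_of_pos (by linarith)
  have h3 : (0:ℝ) < Zr t := lt_of_lt_of_le one_pos (Zr_ge_one (by linarith))
  have : (0:ℝ) < t - 1 := by linarith
  have ht0 : (0:ℝ) < t := by linarith
  unfold rc
  exact mul_pos (mul_pos ht0 this) (mul_pos (mul_pos h1 h2) h3)

lemma rc_ratio {t : ℝ} (ht : 3 ≤ t) : rc t * Real.sqrt t ≤ 8 * rc (t + 1) := by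
  have ht0 : (0:ℝ) < t := by linarith
  -- Gamma ratio bound
  have hstep := gamma_step (y := (t+1)/2) (by linarith)
  have harg : (t+1)/2 + 1/2 = t/2 + 1 := by ring
  rw [harg, Real.Gamma_add_one (ne_of_gt (by linarith : (0:ℝ) < t/2))] at hstep
  -- hstep : t/2 * Γ(t/2) ≤ Γ((t+1)/2) * √((t+1)/2)
  set a := Real.Gamma (t/2) with ha
  set b := Real.Gamma ((t+1)/2) with hb
  have hapos : 0 < a := Real.Gamma_pos_of_pos (by linarith)
  have hbpos : 0 < b := Real.Gamma_pos_of_pos (by linarith)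
  set u := Real.sqrt t with hu
  have hupos : 0 < u := Real.sqrt_pos.mpr ht0
  set w := Real.sqrt ((t+1)/2) with hw
  -- w * u ≤ 0.72 * (t+1)
  have hwu : w * u ≤ 0.72 * (t + 1) := by
    rw [hw, hu, ← Real.sqrt_mul (by positivity)]
    have h1 : (t+1)/2 * t ≤ (0.72 * (t+1))^2 := by nlinarith
    calc Real.sqrt ((t+1)/2 * t) ≤ Real.sqrt ((0.72 * (t+1))^2) := Real.sqrt_le_sqrt h1
      _ = 0.72 * (t+1) := Real.sqrt_sq (by positivity)
  -- a * u bound:  (t/2) * a * u ≤ 0.72 (t+1) b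
  have hau : t/2 * a * u ≤ 0.72 * (t + 1) * b := by
    calc t/2 * a * u ≤ b * w * u :=
          mul_le_mul_of_nonneg_right hstep hupos.le
      _ = b * (w * u) := by ring
      _ ≤ b * (0.72 * (t+1)) := mul_le_mul_of_nonneg_left hwu hbpos.le
      _ = 0.72 * (t+1) * b := by ring
  -- pi powers
  set p := Real.pi ^ (-(t+1) / 2) with hp
  have hppos : 0 < p := Real.rpow_pos_of_pos Real.pi_pos _
  have hπsplit : Real.pi ^ (-t / 2) = Real.pi ^ ((1:ℝ)/2) * p := by
    rw [hp, ← Real.rpow_add Real.pi_pos]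
    congr 1
    ring
  have hπle : Real.pi ^ ((1:ℝ)/2) ≤ 2 := by
    have : Real.pi ^ ((1:ℝ)/2) ≤ 4 ^ ((1:ℝ)/2) :=
      Real.rpow_le_rpow Real.pi_pos.le (by nlinarith [Real.pi_lt_d2]) (by norm_num)
    have h4 : (4:ℝ) ^ ((1:ℝ)/2) = 2 := by
      rw [show (4:ℝ) = 2^(2:ℕ) by norm_num, ← Real.rpow_natCast 2 2, ← Real.rpow_mul (by norm_num)]
      norm_num
    linarith
  have hπpos : 0 < Real.pi ^ ((1:ℝ)/2) := Real.rpow_pos_of_pos Real.pi_pos _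
  -- zeta factors
  have hzt : Zr t ≤ 2 := Zr_le_two (by linarith)
  have hzt0 : 0 < Zr t := lt_of_lt_of_le one_pos (Zr_ge_one (by linarith))
  have hzt1 : 1 ≤ Zr (t+1) := Zr_ge_one (by linarith)
  -- assemble
  rw [rc, rc, hπsplit]
  have key : t * (t-1) * (Real.pi ^ ((1:ℝ)/2) * p * a * Zr t) * u
      ≤ 8 * ((t+1) * (t+1-1) * (p * b * Zr (t+1))) := by
    have step1 : t * (t-1) * (Real.pi ^ ((1:ℝ)/2) * p * a * Zr t) * u
        = (t-1) * Real.pi ^ ((1:ℝ)/2) * Zr t * p * (2 * (t/2 * a * u)) := by ring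
    have hπZ : Real.pi ^ ((1:ℝ)/2) * Zr t ≤ 4 := by nlinarith
    have htp : (0:ℝ) ≤ (t-1) * p := mul_nonneg (by linarith) hppos.le
    have hinner : (0:ℝ) ≤ 2 * (t/2 * a * u) := by positivity
    have step2 : (t-1) * Real.pi ^ ((1:ℝ)/2) * Zr t * p * (2 * (t/2 * a * u))
        ≤ (t-1) * 2 * 2 * p * (2 * (0.72 * (t+1) * b)) := by
      calc (t-1) * Real.pi ^ ((1:ℝ)/2) * Zr t * p * (2 * (t/2 * a * u))
          = ((t-1) * p) * (Real.pi ^ ((1:ℝ)/2) * Zr t) * (2 * (t/2 * a * u)) := by ring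
        _ ≤ ((t-1) * p) * 4 * (2 * (t/2 * a * u)) :=
            mul_le_mul_of_nonneg_right (mul_le_mul_of_nonneg_left hπZ htp) hinner
        _ ≤ ((t-1) * p) * 4 * (2 * (0.72 * (t+1) * b)) := by
            apply mul_le_mul_of_nonneg_left _ (by positivity)
            linarith
        _ = (t-1) * 2 * 2 * p * (2 * (0.72 * (t+1) * b)) := by ring
    have hfac : (0:ℝ) ≤ (t+1) * (p * b) := by positivity
    have h56 : 5.76 * (t-1) ≤ 8 * (t * Zr (t+1)) := by
      nlinarith [mul_nonneg ht0.le (sub_nonneg.mpr hzt1)]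
    have step3 : (t-1) * 2 * 2 * p * (2 * (0.72 * (t+1) * b))
        ≤ 8 * ((t+1) * (t+1-1) * (p * b * Zr (t+1))) := by
      calc (t-1) * 2 * 2 * p * (2 * (0.72 * (t+1) * b))
          = (5.76 * (t-1)) * ((t+1) * (p * b)) := by ring
        _ ≤ (8 * (t * Zr (t+1))) * ((t+1) * (p * b)) := mul_le_mul_of_nonneg_right h56 hfac
        _ = 8 * ((t+1) * (t+1-1) * (p * b * Zr (t+1))) := by ring
    linarith
  calc t * (t - 1) * (Real.pi ^ ((1:ℝ)/2) * p * Real.Gamma (t/2) * Zr t) * Real.sqrt t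
      = t * (t-1) * (Real.pi ^ ((1:ℝ)/2) * p * a * Zr t) * u := by rw [ha, hu]
    _ ≤ 8 * ((t+1) * (t+1-1) * (p * b * Zr (t+1))) := key
    _ = 8 * ((t+1) * (t+1-1) * (Real.pi ^ (-(t+1)/2) * Real.Gamma ((t+1)/2) * Zr (t+1))) := by
        rw [hp, hb]

noncomputable def Ar : ℝ := Real.pi / 3 - 1

noncomputable def Ffun (σ : ℝ) : ℝ :=
  σ * ((σ-2)*(σ+1)*rc σ*rc (3*σ-1) + 2*σ*(σ+1)*rc σ*rc (3*σ-2)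
    + σ*(3*σ-1)*(Ar*σ-1)*rc (σ-1)*rc (3*σ-2))

noncomputable def Gfun (σ : ℝ) : ℝ :=
  (σ-1)*((σ-1)*(3*σ-2)*(Ar*σ-Ar+1)*rc (σ+1)*rc (3*σ)
    - (σ+1)*(σ-2)*rc σ*rc (3*σ-1) - 2*(σ-1)*(σ-2)*rc σ*rc (3*σ))

lemma Ar_bounds : 0.047 ≤ Ar ∧ Ar ≤ 0.05 := by
  constructor <;> · rw [Ar]; nlinarith [Real.pi_gt_d6, Real.pi_lt_d2]

set_option maxHeartbeats 1000000 in
lemma main_est {σ : ℝ} (hσ : 100 ≤ σ) :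
    0 < Gfun σ ∧ 0 < Ffun σ ∧ Ffun σ * σ^2 ≤ 20000 * Gfun σ := by
  obtain ⟨hAr1, hAr2⟩ := Ar_bounds
  have hσ0 : (0:ℝ) < σ := by linarith
  set S := Real.sqrt σ with hS
  have hS2 : S * S = σ := Real.mul_self_sqrt hσ0.le
  have hS0 : 0 < S := Real.sqrt_pos.mpr hσ0
  have hS10 : 10 ≤ S := by
    have h1 : Real.sqrt 100 ≤ S := Real.sqrt_le_sqrt hσ
    have h2 : Real.sqrt 100 = 10 := by
      rw [show (100:ℝ) = 10^2 by norm_num, Real.sqrt_sq (by norm_num : (0:ℝ) ≤ 10)]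
    linarith
  -- positivity of rc values
  have pσ : 0 < rc σ := rc_pos (by linarith)
  have pσ1 : 0 < rc (σ+1) := rc_pos (by linarith)
  have pσm : 0 < rc (σ-1) := rc_pos (by linarith)
  have p3 : 0 < rc (3*σ) := rc_pos (by linarith)
  have p31 : 0 < rc (3*σ-1) := rc_pos (by linarith)
  have p32 : 0 < rc (3*σ-2) := rc_pos (by linarith)
  -- ratio bounds
  have b1 : rc σ * S ≤ 8 * rc (σ+1) := rc_ratio (by linarith)
  have b2 : rc (3*σ-1) * S ≤ 8 * rc (3*σ) := by
    have h := rc_ratio (t := 3*σ-1) (by linarith)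
    rw [show 3*σ-1+1 = 3*σ by ring] at h
    have hm : S ≤ Real.sqrt (3*σ-1) := Real.sqrt_le_sqrt (by linarith)
    calc rc (3*σ-1) * S ≤ rc (3*σ-1) * Real.sqrt (3*σ-1) :=
          mul_le_mul_of_nonneg_left hm p31.le
      _ ≤ 8 * rc (3*σ) := h
  have b3 : rc (3*σ-2) * S ≤ 8 * rc (3*σ-1) := by
    have h := rc_ratio (t := 3*σ-2) (by linarith)
    rw [show 3*σ-2+1 = 3*σ-1 by ring] at h
    have hm : S ≤ Real.sqrt (3*σ-2) := Real.sqrt_le_sqrt (by linarith)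
    calc rc (3*σ-2) * S ≤ rc (3*σ-2) * Real.sqrt (3*σ-2) :=
          mul_le_mul_of_nonneg_left hm p32.le
      _ ≤ 8 * rc (3*σ-1) := h
  have b4 : rc (σ-1) * S ≤ 9 * rc σ := by
    have h := rc_ratio (t := σ-1) (by linarith)
    rw [show σ-1+1 = σ by ring] at h
    have hm : S ≤ (10/9) * Real.sqrt (σ-1) := by
      have h1 : σ ≤ ((10/9) * Real.sqrt (σ-1))^2 := by
        have : Real.sqrt (σ-1) ^ 2 = σ - 1 := Real.sq_sqrt (by linarith)
        linarith [this]
      calc S = Real.sqrt σ := rfl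
        _ ≤ Real.sqrt (((10/9) * Real.sqrt (σ-1))^2) := Real.sqrt_le_sqrt h1
        _ = (10/9) * Real.sqrt (σ-1) := Real.sqrt_sq (by positivity)
    calc rc (σ-1) * S ≤ rc (σ-1) * ((10/9) * Real.sqrt (σ-1)) :=
          mul_le_mul_of_nonneg_left hm pσm.le
      _ = (10/9) * (rc (σ-1) * Real.sqrt (σ-1)) := by ring
      _ ≤ (10/9) * (8 * rc σ) := mul_le_mul_of_nonneg_left h (by norm_num)
      _ ≤ 9 * rc σ := by linarith
  -- second-order bounds
  have c3 : rc (3*σ-2) * σ ≤ 64 * rc (3*σ) := by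
    calc rc (3*σ-2) * σ = (rc (3*σ-2) * S) * S := by rw [mul_assoc, hS2]
      _ ≤ (8 * rc (3*σ-1)) * S := mul_le_mul_of_nonneg_right b3 hS0.le
      _ = 8 * (rc (3*σ-1) * S) := by ring
      _ ≤ 8 * (8 * rc (3*σ)) := mul_le_mul_of_nonneg_left b2 (by norm_num)
      _ = 64 * rc (3*σ) := by ring
  have c4 : rc (σ-1) * σ ≤ 72 * rc (σ+1) := by
    calc rc (σ-1) * σ = (rc (σ-1) * S) * S := by rw [mul_assoc, hS2]
      _ ≤ (9 * rc σ) * S := mul_le_mul_of_nonneg_right b4 hS0.le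
      _ = 9 * (rc σ * S) := by ring
      _ ≤ 9 * (8 * rc (σ+1)) := mul_le_mul_of_nonneg_left b1 (by norm_num)
      _ = 72 * rc (σ+1) := by ring
  set R := rc (σ+1) * rc (3*σ) with hRdef
  have hR : 0 < R := mul_pos pσ1 p3
  -- product bounds
  have hprod1 : rc σ * rc (3*σ-1) * σ ≤ 64 * R := by
    have h := mul_le_mul b1 b2 (mul_nonneg p31.le hS0.le) (by linarith [pσ1.le] : (0:ℝ) ≤ 8 * rc (σ+1))
    calc rc σ * rc (3*σ-1) * σ = (rc σ * S) * (rc (3*σ-1) * S) := by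
          rw [← hS2]; ring
      _ ≤ (8 * rc (σ+1)) * (8 * rc (3*σ)) := h
      _ = 64 * R := by rw [hRdef]; ring
  have hprod2 : rc σ * rc (3*σ-2) * σ * 10 ≤ 512 * R := by
    have h := mul_le_mul b1 c3 (mul_nonneg p32.le hσ0.le) (by linarith [pσ1.le] : (0:ℝ) ≤ 8 * rc (σ+1))
    have h2 : rc σ * rc (3*σ-2) * σ * S ≤ 512 * R := by
      calc rc σ * rc (3*σ-2) * σ * S = (rc σ * S) * (rc (3*σ-2) * σ) := by ring
        _ ≤ (8 * rc (σ+1)) * (64 * rc (3*σ)) := h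
        _ = 512 * R := by rw [hRdef]; ring
    have h3 : rc σ * rc (3*σ-2) * σ * 10 ≤ rc σ * rc (3*σ-2) * σ * S :=
      mul_le_mul_of_nonneg_left hS10 (mul_nonneg (mul_nonneg pσ.le p32.le) hσ0.le)
    linarith
  have hprod3 : rc (σ-1) * rc (3*σ-2) * σ * σ ≤ 4608 * R := by
    have h := mul_le_mul c4 c3 (mul_nonneg p32.le hσ0.le) (by linarith [pσ1.le] : (0:ℝ) ≤ 72 * rc (σ+1))
    calc rc (σ-1) * rc (3*σ-2) * σ * σ = (rc (σ-1) * σ) * (rc (3*σ-2) * σ) := by ring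
      _ ≤ (72 * rc (σ+1)) * (64 * rc (3*σ)) := h
      _ = 4608 * R := by rw [hRdef]; ring
  have hprod4 : rc σ * rc (3*σ) ≤ (4/5) * R := by
    have h : (rc σ * S) * rc (3*σ) ≤ (8 * rc (σ+1)) * rc (3*σ) :=
      mul_le_mul_of_nonneg_right b1 p3.le
    have h2 : rc σ * rc (3*σ) * 10 ≤ rc σ * rc (3*σ) * S :=
      mul_le_mul_of_nonneg_left hS10 (mul_nonneg pσ.le p3.le)
    have h3 : rc σ * rc (3*σ) * S = (rc σ * S) * rc (3*σ) := by ring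
    have h4 : (8 * rc (σ+1)) * rc (3*σ) = 8 * R := by rw [hRdef]; ring
    linarith [h, h2, h3.ge, h3.le, h4.le, h4.ge]
  -- E bounds
  have hE1 : (σ-2)*(σ+1)*rc σ*rc (3*σ-1) ≤ 64*σ*R := by
    rw [← mul_le_mul_iff_of_pos_right hσ0]
    calc (σ-2)*(σ+1)*rc σ*rc (3*σ-1)*σ
        = ((σ-2)*(σ+1)) * (rc σ * rc (3*σ-1) * σ) := by ring
      _ ≤ ((σ-2)*(σ+1)) * (64 * R) :=
          mul_le_mul_of_nonneg_left hprod1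
            (by linarith [mul_pos (show (0:ℝ) < σ-2 by linarith) (show (0:ℝ) < σ+1 by linarith)])
      _ ≤ (σ^2) * (64 * R) := by
          linarith [mul_nonneg (by linarith : (0:ℝ) ≤ σ+2) hR.le]
      _ = 64*σ*R*σ := by ring
  have hE2 : 2*σ*(σ+1)*rc σ*rc (3*σ-2) ≤ 104*σ*R := by
    rw [← mul_le_mul_iff_of_pos_right (show (0:ℝ) < 10*σ by linarith)]
    calc 2*σ*(σ+1)*rc σ*rc (3*σ-2)*(10*σ)
        = (2*σ*(σ+1)) * (rc σ * rc (3*σ-2) * σ * 10) := by ring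
      _ ≤ (2*σ*(σ+1)) * (512 * R) :=
          mul_le_mul_of_nonneg_left hprod2
            (by linarith [mul_pos hσ0 (show (0:ℝ) < σ+1 by linarith)])
      _ ≤ 104*σ*R*(10*σ) := by
          linarith [mul_nonneg (mul_nonneg hσ0.le hR.le) (show (0:ℝ) ≤ σ-64 by linarith)]
  have hE3 : σ*(3*σ-1)*(Ar*σ-1)*rc (σ-1)*rc (3*σ-2) ≤ 700*σ*R := by
    have hArσ : (0:ℝ) < Ar*σ-1 := by
      have := mul_le_mul hAr1 hσ (by norm_num) (by linarith)
      linarith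
    rw [← mul_le_mul_iff_of_pos_right (show (0:ℝ) < σ*σ by positivity)]
    calc σ*(3*σ-1)*(Ar*σ-1)*rc (σ-1)*rc (3*σ-2)*(σ*σ)
        = (σ*(3*σ-1)*(Ar*σ-1)) * (rc (σ-1) * rc (3*σ-2) * σ * σ) := by ring
      _ ≤ (σ*(3*σ-1)*(Ar*σ-1)) * (4608 * R) := by
          apply mul_le_mul_of_nonneg_left hprod3
          linarith [mul_pos (mul_pos hσ0 (show (0:ℝ) < 3*σ-1 by linarith)) hArσ]
      _ = ((σ*(3*σ-1)*(Ar*σ-1)) * 4608) * R := by ring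
      _ ≤ (700*σ^3) * R := by
          apply mul_le_mul_of_nonneg_right _ hR.le
          have h1 : Ar*σ^3 ≤ 0.05*σ^3 :=
            mul_le_mul_of_nonneg_right hAr2 (by positivity)
          have h2 : (0:ℝ) ≤ Ar*σ^2 :=
            mul_nonneg (by linarith) (sq_nonneg σ)
          have h3 : σ*1 ≤ σ*σ := mul_le_mul_of_nonneg_left (by linarith) hσ0.le
          linarith [h1, h2, h3, sq_nonneg σ, pow_nonneg hσ0.le 3]
      _ = 700*σ*R*(σ*σ) := by ring
  -- F upper bound and positivity
  have hFup : Ffun σ ≤ 1000 * σ^2 * R := by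
    rw [Ffun]
    have hsum : (σ-2)*(σ+1)*rc σ*rc (3*σ-1) + 2*σ*(σ+1)*rc σ*rc (3*σ-2)
        + σ*(3*σ-1)*(Ar*σ-1)*rc (σ-1)*rc (3*σ-2) ≤ 868*σ*R := by linarith
    calc σ * ((σ-2)*(σ+1)*rc σ*rc (3*σ-1) + 2*σ*(σ+1)*rc σ*rc (3*σ-2)
        + σ*(3*σ-1)*(Ar*σ-1)*rc (σ-1)*rc (3*σ-2))
        ≤ σ * (868*σ*R) := mul_le_mul_of_nonneg_left hsum hσ0.le
      _ ≤ 1000 * σ^2 * R := by linarith [mul_nonneg (sq_nonneg σ) hR.le]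
  have hFpos : 0 < Ffun σ := by
    rw [Ffun]
    have hArσ : (0:ℝ) < Ar*σ-1 := by
      have := mul_le_mul hAr1 hσ (by norm_num) (by linarith)
      linarith
    have h1 : 0 < (σ-2)*(σ+1)*rc σ*rc (3*σ-1) := by
      linarith [mul_pos (mul_pos (show (0:ℝ) < σ-2 by linarith)
        (show (0:ℝ) < σ+1 by linarith)) (mul_pos pσ p31)]
    have h2 : 0 < 2*σ*(σ+1)*rc σ*rc (3*σ-2) := by
      linarith [mul_pos (mul_pos (mul_pos (show (0:ℝ) < (2:ℝ) by norm_num) hσ0)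
        (show (0:ℝ) < σ+1 by linarith)) (mul_pos pσ p32)]
    have h3 : 0 < σ*(3*σ-1)*(Ar*σ-1)*rc (σ-1)*rc (3*σ-2) := by
      linarith [mul_pos (mul_pos (mul_pos hσ0 (show (0:ℝ) < 3*σ-1 by linarith)) hArσ)
        (mul_pos pσm p32)]
    linarith [mul_pos hσ0 (show (0:ℝ) < (σ-2)*(σ+1)*rc σ*rc (3*σ-1) + 2*σ*(σ+1)*rc σ*rc (3*σ-2) + σ*(3*σ-1)*(Ar*σ-1)*rc (σ-1)*rc (3*σ-2) by linarith)]
  -- G lower bound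
  have hT1 : 0.138*σ^3*R ≤ (σ-1)*(3*σ-2)*(Ar*σ-Ar+1)*rc (σ+1)*rc (3*σ) := by
    have c1 : 2.95*σ^2 ≤ (σ-1)*(3*σ-2) := by
      linarith [mul_le_mul_of_nonneg_left hσ hσ0.le]
    have c2 : 0.047*σ ≤ Ar*σ-Ar+1 := by
      linarith [mul_le_mul_of_nonneg_right hAr1 hσ0.le]
    have c12 : (2.95*σ^2)*(0.047*σ) ≤ ((σ-1)*(3*σ-2))*(Ar*σ-Ar+1) :=
      mul_le_mul c1 c2 (by positivity)
        (by linarith [mul_pos (show (0:ℝ) < σ-1 by linarith) (show (0:ℝ) < 3*σ-2 by linarith)])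
    have : 0.138*σ^3 ≤ (σ-1)*(3*σ-2)*(Ar*σ-Ar+1) := by linarith [c12, pow_nonneg hσ0.le 3]
    calc 0.138*σ^3*R ≤ ((σ-1)*(3*σ-2)*(Ar*σ-Ar+1)) * R :=
          mul_le_mul_of_nonneg_right this hR.le
      _ = (σ-1)*(3*σ-2)*(Ar*σ-Ar+1)*rc (σ+1)*rc (3*σ) := by rw [hRdef]; ring
  have hT3 : 2*(σ-1)*(σ-2)*rc σ*rc (3*σ) ≤ 2*σ^2*R := by
    have hc : 2*(σ-1)*(σ-2) ≤ 2*σ^2 := by linarith [mul_pos hσ0 hσ0]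
    have := mul_le_mul hc hprod4 (mul_pos pσ p3).le (by positivity)
    linarith [this, mul_nonneg (sq_nonneg σ) hR.le]
  have hGlow : (1/20)*σ^4*R ≤ Gfun σ := by
    rw [Gfun]
    have hinner : 0.1*σ^3*R ≤ (σ-1)*(3*σ-2)*(Ar*σ-Ar+1)*rc (σ+1)*rc (3*σ)
        - (σ+1)*(σ-2)*rc σ*rc (3*σ-1) - 2*(σ-1)*(σ-2)*rc σ*rc (3*σ) := by
      have hT2 : (σ+1)*(σ-2)*rc σ*rc (3*σ-1) ≤ 64*σ*R := by linarith [hE1]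
      have hb1 : 64*σ*R ≤ 0.0064*σ^3*R := by
        have hsq : (100:ℝ)*100 ≤ σ*σ := mul_le_mul hσ hσ (by norm_num) hσ0.le
        linarith [mul_nonneg (mul_nonneg hσ0.le hR.le) (show (0:ℝ) ≤ σ*σ-10000 by linarith)]
      have hb2 : 2*σ^2*R ≤ 0.02*σ^3*R := by
        linarith [mul_nonneg (mul_nonneg (mul_nonneg hσ0.le hσ0.le) hR.le) (show (0:ℝ) ≤ σ-100 by linarith)]
      linarith
    have hout : (σ-1) * (0.1*σ^3*R) ≤ (σ-1) * ((σ-1)*(3*σ-2)*(Ar*σ-Ar+1)*rc (σ+1)*rc (3*σ)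
        - (σ+1)*(σ-2)*rc σ*rc (3*σ-1) - 2*(σ-1)*(σ-2)*rc σ*rc (3*σ)) :=
      mul_le_mul_of_nonneg_left hinner (by linarith)
    have hlast : (1/20)*σ^4*R ≤ (σ-1) * (0.1*σ^3*R) := by
      linarith [mul_nonneg (mul_nonneg (mul_nonneg (mul_nonneg hσ0.le hσ0.le) hσ0.le) hR.le) (show (0:ℝ) ≤ σ-2 by linarith)]
    linarith
  have hGpos : 0 < Gfun σ := by
    have : (0:ℝ) < (1/20)*σ^4*R := by positivity
    linarith
  refine ⟨hGpos, hFpos, ?_⟩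
  have h1 : Ffun σ * σ^2 ≤ 1000*σ^2*R*σ^2 := mul_le_mul_of_nonneg_right hFup (sq_nonneg σ)
  have h2 : 1000*σ^2*R*σ^2 = 20000 * ((1/20)*σ^4*R) := by ring
  linarith

lemma A_eq : A = ((Ar : ℝ) : ℂ) := by
  rw [A, Ar]
  push_cast
  ring

lemma f1_eq_Gfun {σ : ℝ} (hσ : 2 < σ) : f1 (σ : ℂ) = ((Gfun σ : ℝ) : ℂ) := by
  have h3 : (3 * (σ:ℂ) - 1) = ((3*σ-1 : ℝ) : ℂ) := by push_cast; ring
  have h2 : (3 * (σ:ℂ)) = ((3*σ : ℝ) : ℂ) := by push_cast; ring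
  have h1 : ((σ:ℂ) + 1) = ((σ+1 : ℝ) : ℂ) := by push_cast; ring
  rw [f1, h3, h2, h1, chi_ofReal (show (1:ℝ) < σ+1 by linarith),
    chi_ofReal (show (1:ℝ) < 3*σ by linarith),
    chi_ofReal (show (1:ℝ) < σ by linarith),
    chi_ofReal (show (1:ℝ) < 3*σ-1 by linarith), A_eq, Gfun]
  push_cast
  ring

lemma f1_one_sub_eq_Ffun {σ : ℝ} (hσ : 2 < σ) : f1 (1 - (σ : ℂ)) = ((Ffun σ : ℝ) : ℂ) := by
  have e3 : 3 * (1 - (σ:ℂ)) - 1 = 1 - ((3*σ-1 : ℝ) : ℂ) := by push_cast; ring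
  have e2 : 3 * (1 - (σ:ℂ)) = 1 - ((3*σ-2 : ℝ) : ℂ) := by push_cast; ring
  have e1 : (1 - (σ:ℂ)) + 1 = 1 - ((σ-1 : ℝ) : ℂ) := by push_cast; ring
  have e0 : (1 : ℂ) - (σ:ℂ) = 1 - ((σ : ℝ) : ℂ) := rfl
  rw [f1, e3, e2, e1]
  rw [chi_one_sub, chi_one_sub, chi_one_sub, e0, chi_one_sub]
  rw [chi_ofReal (show (1:ℝ) < σ-1 by linarith),
    chi_ofReal (show (1:ℝ) < 3*σ-2 by linarith),
    chi_ofReal (show (1:ℝ) < σ by linarith),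
    chi_ofReal (show (1:ℝ) < 3*σ-1 by linarith), A_eq, Ffun]
  push_cast
  ring

theorem f1_ratio_decay :
    ∃ σstar C : ℝ, 1 < σstar ∧ 0 < C ∧
      (∀ σ : ℝ, σstar ≤ σ →
        f1 (σ : ℂ) ≠ 0 ∧
        (f1 (1 - (σ : ℂ)) / f1 (σ : ℂ)).im = 0 ∧
        0 < (f1 (1 - (σ : ℂ)) / f1 (σ : ℂ)).re ∧
        (f1 (1 - (σ : ℂ)) / f1 (σ : ℂ)).re ≤ C * σ ^ (-2 : ℤ)) ∧
      Filter.Tendsto (fun σ : ℝ => f1 (1 - (σ : ℂ)) / f1 (σ : ℂ))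
        Filter.atTop (nhds 0) := by
  have hmain : ∀ σ : ℝ, 100 ≤ σ →
      f1 (σ:ℂ) = ((Gfun σ : ℝ) : ℂ) ∧ f1 (1 - (σ:ℂ)) = ((Ffun σ : ℝ) : ℂ) ∧
      0 < Gfun σ ∧ 0 < Ffun σ ∧ Ffun σ / Gfun σ ≤ 20000 / σ^2 := by
    intro σ hσ
    obtain ⟨hG, hF, hFG⟩ := main_est hσ
    have hσ0 : (0:ℝ) < σ := by linarith
    refine ⟨f1_eq_Gfun (by linarith), f1_one_sub_eq_Ffun (by linarith), hG, hF, ?_⟩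
    rw [div_le_div_iff₀ hG (by positivity)]
    linarith [hFG]
  refine ⟨100, 20000, by norm_num, by norm_num, ?_, ?_⟩
  · intro σ hσ
    obtain ⟨hGf, hFf, hG, hF, hle⟩ := hmain σ hσ
    have hσ0 : (0:ℝ) < σ := by linarith
    have hdiv : f1 (1 - (σ:ℂ)) / f1 (σ:ℂ) = ((Ffun σ / Gfun σ : ℝ) : ℂ) := by
      rw [hGf, hFf, ofReal_div]
    refine ⟨?_, ?_, ?_, ?_⟩
    · rw [hGf]
      exact_mod_cast hG.ne'
    · rw [hdiv, ofReal_im]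
    · rw [hdiv, ofReal_re]
      exact div_pos hF hG
    · rw [hdiv, ofReal_re]
      have hz : (σ:ℝ) ^ (-2 : ℤ) = (σ^2)⁻¹ := by
        rw [zpow_neg, zpow_two, sq]
      rw [hz]
      calc Ffun σ / Gfun σ ≤ 20000 / σ^2 := hle
        _ = 20000 * (σ^2)⁻¹ := by ring
  · rw [tendsto_zero_iff_norm_tendsto_zero]
    apply squeeze_zero' (g := fun σ : ℝ => 20000/σ^2) (Filter.Eventually.of_forall fun σ => norm_nonneg _)
    · filter_upwards [Filter.eventually_ge_atTop (100:ℝ)] with σ hσ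
      obtain ⟨hGf, hFf, hG, hF, hle⟩ := hmain σ hσ
      have hdiv : f1 (1 - (σ:ℂ)) / f1 (σ:ℂ) = ((Ffun σ / Gfun σ : ℝ) : ℂ) := by
        rw [hGf, hFf, ofReal_div]
      rw [hdiv, Complex.norm_real, Real.norm_eq_abs, _root_.abs_of_nonneg (div_pos hF hG).le]
      exact hle
    · apply Filter.Tendsto.div_atTop (tendsto_const_nhds (x := (20000:ℝ)))
      exact Filter.tendsto_pow_atTop (by norm_num)
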